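/- If A is a C* set in (N,+), then for every n ∈ N the set n⁻¹A = {m ∈ N : n·m ∈ A} is also a C* set. -/

import Mathlib

attribute [local instance] Ultrafilter.addSemigroup

/-- `A` is a J-set in `(ℕ, +)`. -/
def IsJSet (A : Set ℕ) : Prop :=
  ∀ F : Finset (ℕ → ℕ), ∃ (a : ℕ) (H : Finset ℕ), H.Nonempty ∧
    ∀ f ∈ F, a + ∑ t ∈ H, f t ∈ A

/-- `J(ℕ)`: ultrafilters on `ℕ` all of whose members are J-sets. -/
def JN : Set (Ultrafilter ℕ) :=
  {p | ∀ A ∈ p, IsJSet A}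

/-- `A` is a C* set in `(ℕ, +)`: a member of every idempotent in `J(ℕ)`. -/
def IsCStarSet (A : Set ℕ) : Prop :=
  ∀ p : Ultrafilter ℕ, p + p = p → p ∈ JN → A ∈ p

/-- Key combinatorial lemma: if `B` is a J-set and `n·B ⊆ A`, then `A` is a J-set. -/
theorem isJSet_of_mul (B A : Set ℕ) (n : ℕ) (hn : 0 < n) (hB : IsJSet B)
    (hBA : ∀ b ∈ B, n * b ∈ A) : IsJSet A := by
  classical
  intro F
  haveI : NeZero n := ⟨hn.ne'⟩
  -- prefix-sum residue vectors
  set V : ℕ → ({f // f ∈ F} → ZMod n) :=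
    fun m f => ((∑ s ∈ Finset.range m, f.1 s : ℕ) : ZMod n) with hV
  obtain ⟨v, hv⟩ := Finite.exists_infinite_fiber V
  have hS : (V ⁻¹' {v}).Infinite := Set.infinite_coe_iff.mp hv
  -- a strictly increasing sequence within the fiber
  let g : ℕ → ℕ := fun a => (hS.exists_gt a).choose
  have hgS : ∀ a, g a ∈ V ⁻¹' {v} := fun a => (hS.exists_gt a).choose_spec.1
  have hglt : ∀ a, a < g a := fun a => (hS.exists_gt a).choose_spec.2
  let m : ℕ → ℕ := fun t => g^[t + 1] 0
  have hm_succ : ∀ t, m (t + 1) = g (m t) := by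
    intro t
    simp only [m, Function.iterate_succ_apply']
  have hmS : ∀ t, V (m t) = v := by
    intro t
    have : m t = g (g^[t] 0) := by simp only [m, Function.iterate_succ_apply']
    rw [this]
    exact hgS _
  have hmlt : ∀ t, m t < m (t + 1) := by
    intro t; rw [hm_succ]; exact hglt _
  have hmono : StrictMono m := strictMono_nat_of_lt_succ hmlt
  -- block sums are divisible by n
  have hdvd : ∀ f (_ : f ∈ F) (t : ℕ), n ∣ ∑ s ∈ Finset.Ico (m t) (m (t + 1)), f s := by
    intro f hf t
    rw [← ZMod.natCast_eq_zero_iff]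
    have hsplit : (∑ s ∈ Finset.range (m t), f s) + ∑ s ∈ Finset.Ico (m t) (m (t + 1)), f s
        = ∑ s ∈ Finset.range (m (t + 1)), f s := by
      rw [Finset.range_eq_Ico, Finset.range_eq_Ico]
      exact Finset.sum_Ico_consecutive f (Nat.zero_le _) (hmlt t).le
    have h1 : V (m t) ⟨f, hf⟩ = v ⟨f, hf⟩ := by rw [hmS]
    have h2 : V (m (t + 1)) ⟨f, hf⟩ = v ⟨f, hf⟩ := by rw [hmS]
    have h3 := congrArg (fun x : ℕ => (x : ZMod n)) hsplit
    simp only [Nat.cast_add] at h3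
    simp only [hV] at h1 h2
    rw [h1, h2] at h3
    linear_combination h3
  -- the scaled-down block-sum functions
  set G : (ℕ → ℕ) → ℕ → ℕ :=
    fun f t => (∑ s ∈ Finset.Ico (m t) (m (t + 1)), f s) / n with hG
  obtain ⟨a', H', hne', hmem'⟩ := hB (F.image G)
  refine ⟨n * a', H'.biUnion fun t => Finset.Ico (m t) (m (t + 1)), ?_, ?_⟩
  · obtain ⟨t, ht⟩ := hne'
    exact ⟨m t, Finset.mem_biUnion.mpr ⟨t, ht, Finset.mem_Ico.mpr ⟨le_refl _, hmlt t⟩⟩⟩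
  · intro f hf
    have hdisj : ∀ t₁ ∈ H', ∀ t₂ ∈ H', t₁ ≠ t₂ →
        Disjoint (Finset.Ico (m t₁) (m (t₁ + 1))) (Finset.Ico (m t₂) (m (t₂ + 1))) := by
      intro t₁ _ t₂ _ hne
      rcases lt_or_gt_of_ne hne with h | h
      · exact Finset.Ico_disjoint_Ico_consecutive _ _ _ |>.mono_right
          (Finset.Ico_subset_Ico (hmono.monotone (Nat.succ_le_of_lt h)) le_rfl)
      · exact (Finset.Ico_disjoint_Ico_consecutive _ _ _ |>.mono_right
          (Finset.Ico_subset_Ico (hmono.monotone (Nat.succ_le_of_lt h)) le_rfl)).symm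
    rw [Finset.sum_biUnion hdisj]
    have hsum : ∀ t, ∑ s ∈ Finset.Ico (m t) (m (t + 1)), f s = n * G f t := by
      intro t
      rw [hG]
      exact (Nat.mul_div_cancel' (hdvd f hf t)).symm
    have heq : n * a' + ∑ t ∈ H', ∑ s ∈ Finset.Ico (m t) (m (t + 1)), f s
        = n * (a' + ∑ t ∈ H', G f t) := by
      simp_rw [hsum]
      rw [Nat.mul_add, Finset.mul_sum]
    rw [heq]
    exact hBA _ (hmem' (G f) (Finset.mem_image_of_mem G hf))

/-- If `A` is a C* set in `(ℕ,+)` then so is `n⁻¹A = {m : n·m ∈ A}` for every `n`. -/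
theorem cStarSet_div (A : Set ℕ) (hA : IsCStarSet A) (n : ℕ) (hn : 0 < n) :
    IsCStarSet {m : ℕ | n * m ∈ A} := by
  intro p hp hpJ
  set q : Ultrafilter ℕ := Ultrafilter.map (fun m => n * m) p with hq
  have hqq : q + q = q := by
    apply Ultrafilter.coe_inj.mp
    apply Filter.ext'
    intro r
    rw [Ultrafilter.eventually_add]
    simp only [hq, Ultrafilter.coe_map, Filter.eventually_map]
    conv_rhs => rw [← hp]
    rw [Ultrafilter.eventually_add]
    simp only [Nat.mul_add]
  have hqJ : q ∈ JN := by
    intro s hs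
    have hs' : {m : ℕ | n * m ∈ s} ∈ p := Ultrafilter.mem_map.mp hs
    exact isJSet_of_mul _ s n hn (hpJ _ hs') fun b hb => hb
  exact Ultrafilter.mem_map.mp (hA q hqq hqJ)
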